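/- Let 𝒫 ⊂ ℝ^m be a lattice polytope of dimension d. Then rdeg y ≤ d + 1 for all y ∈ M*(𝒫). -/

import Mathlib

open Set

noncomputable section

/-- Lift a point of `ℝ^m` to height 1 in `ℝ^(m+1)`. -/
def lift {m : ℕ} (x : Fin m → ℝ) : Fin (m + 1) → ℝ := Fin.snoc x 1

/-- A point with integer coordinates (a lattice point). -/
def isLat {n : ℕ} (x : Fin n → ℝ) : Prop := ∀ i, ∃ z : ℤ, x i = (z : ℝ)

/-- The cone `C(P)` generated by `P × {1}` (for convex `P`). -/
def coneOf {m : ℕ} (P : Set (Fin m → ℝ)) : Set (Fin (m + 1) → ℝ) :=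
  {y | ∃ (c : ℝ) (p : Fin m → ℝ), 0 ≤ c ∧ p ∈ P ∧ y = c • lift p}

/-- The semigroup `M(P)` generated by the lattice points of `P × {1}`. -/
def Msemi {m : ℕ} (P : Set (Fin m → ℝ)) : AddSubmonoid (Fin (m + 1) → ℝ) :=
  AddSubmonoid.closure {y | ∃ p ∈ P, isLat p ∧ y = lift p}

/-- `M*(P)`: the lattice points in the relative interior of `C(P)`. -/
def Mstar {m : ℕ} (P : Set (Fin m → ℝ)) : Set (Fin (m + 1) → ℝ) :=
  {y | y ∈ intrinsicInterior ℝ (coneOf P) ∧ isLat y}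

/-- The degree: the last coordinate. -/
def deg {m : ℕ} (y : Fin (m + 1) → ℝ) : ℝ := y (Fin.last m)

/-- The reduced `P`-degree of `y`. -/
def rdeg {m : ℕ} (P : Set (Fin m → ℝ)) (y : Fin (m + 1) → ℝ) : ℝ :=
  sInf {r | ∃ z w, z ∈ Mstar P ∧ w ∈ Msemi P ∧ y = z + w ∧ r = deg z}

/-- An empty lattice simplex: its only lattice points are its vertices. -/
def IsEmptyLatticeSimplex {m : ℕ} (s : Set (Fin m → ℝ)) : Prop :=
  ∃ (k : ℕ) (x : Fin (k + 1) → (Fin m → ℝ)), AffineIndependent ℝ x ∧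
    (∀ i, isLat (x i)) ∧ s = convexHull ℝ (Set.range x) ∧
    (∀ p ∈ s, isLat p → p ∈ Set.range x)

/-- A lattice triangulation of `P`: a finite face-closed family of empty lattice
simplices covering `P`, with pairwise disjoint relative interiors (every point of `P`
lies in the relative interior of exactly one simplex), and using every lattice point
of `P` as a vertex. -/
structure IsLatticeTriangulation {m : ℕ} (P : Set (Fin m → ℝ))
    (T : Set (Set (Fin m → ℝ))) : Prop where
  finite : T.Finite
  simplex : ∀ s ∈ T, IsEmptyLatticeSimplex s
  subset : ∀ s ∈ T, s ⊆ P
  partition : ∀ p ∈ P, ∃! s, s ∈ T ∧ p ∈ intrinsicInterior ℝ s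
  vertex : ∀ p ∈ P, isLat p → {p} ∈ T

-- helper: smul of lift
lemma smul_lift' {m : ℕ} (c : ℝ) (p : Fin m → ℝ) :
    c • lift p = Fin.snoc (c • p) c := by
  funext j
  refine Fin.lastCases ?_ (fun i => ?_) j <;>
    simp [lift, Fin.snoc_last, Fin.snoc_castSucc, mul_one]

lemma sum_smul_lift' {m : ℕ} {ι : Type*} [Fintype ι] (μ : ι → ℝ) (v : ι → Fin m → ℝ) :
    (∑ i, μ i • lift (v i)) = Fin.snoc (∑ i, μ i • v i) (∑ i, μ i) := by
  funext j
  refine Fin.lastCases ?_ (fun i0 => ?_) j <;>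
    simp [lift, Finset.sum_apply, Fin.snoc_last, Fin.snoc_castSucc, mul_one]

lemma sum_mem_cone' {m : ℕ} {P : Set (Fin m → ℝ)} (hconv : Convex ℝ P)
    {ι : Type*} [Fintype ι] [Nonempty ι] {μ : ι → ℝ} (hμ : ∀ i, 0 ≤ μ i)
    {v : ι → Fin m → ℝ} (hv : ∀ i, v i ∈ P) :
    (∑ i, μ i • lift (v i)) ∈ coneOf P := by
  set S := ∑ i, μ i with hS
  have hS0 : 0 ≤ S := Finset.sum_nonneg fun i _ => hμ i
  rcases eq_or_lt_of_le hS0 with h | h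
  · have hall : ∀ i ∈ Finset.univ, μ i = 0 :=
      (Finset.sum_eq_zero_iff_of_nonneg fun i _ => hμ i).1 h.symm
    refine ⟨0, v (Classical.arbitrary ι), le_refl 0, hv _, ?_⟩
    rw [zero_smul]
    exact Finset.sum_eq_zero fun i _ => by rw [hall i (Finset.mem_univ i), zero_smul]
  · refine ⟨S, ∑ i, (μ i / S) • v i, hS0, ?_, ?_⟩
    · exact hconv.sum_mem (fun i _ => div_nonneg (hμ i) hS0)
        (by rw [← Finset.sum_div, ← hS, div_self h.ne']) (fun i _ => hv i)
    · rw [sum_smul_lift', smul_lift']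
      funext j
      refine Fin.lastCases ?_ (fun i0 => ?_) j
      · simp [Fin.snoc_last, hS]
      · simp only [Fin.snoc_castSucc, Finset.sum_apply, Pi.smul_apply, smul_eq_mul,
          Finset.mul_sum]
        refine Finset.sum_congr rfl fun i _ => ?_
        field_simp

lemma mem_relint_iff' {n : ℕ} {C : Set (Fin n → ℝ)} {y : Fin n → ℝ} :
    y ∈ intrinsicInterior ℝ C ↔
      y ∈ affineSpan ℝ C ∧
        ∃ δ > 0, ∀ u, u ∈ affineSpan ℝ C → dist u y < δ → u ∈ C := by
  constructor
  · intro h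
    obtain ⟨yh, hint, rfl⟩ := (mem_intrinsicInterior).1 h
    refine ⟨yh.2, ?_⟩
    rw [mem_interior_iff_mem_nhds, Metric.mem_nhds_iff] at hint
    obtain ⟨δ, hδ, hball⟩ := hint
    refine ⟨δ, hδ, fun u hu hd => ?_⟩
    have : (⟨u, hu⟩ : affineSpan ℝ C) ∈ Metric.ball yh δ := by
      simpa [Metric.mem_ball, Subtype.dist_eq] using hd
    exact hball this
  · rintro ⟨hy, δ, hδ, h⟩
    rw [mem_intrinsicInterior]
    refine ⟨⟨y, hy⟩, ?_, rfl⟩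
    rw [mem_interior_iff_mem_nhds, Metric.mem_nhds_iff]
    refine ⟨δ, hδ, fun u hu => ?_⟩
    exact h u u.2 (by simpa [Metric.mem_ball, Subtype.dist_eq] using hu)

lemma smul_add_mem_relint' {n : ℕ} {C : Set (Fin n → ℝ)}
    (h0 : (0 : Fin n → ℝ) ∈ C)
    (hadd : ∀ a b, a ∈ C → b ∈ C → a + b ∈ C)
    (hsmul : ∀ (c : ℝ) a, 0 ≤ c → a ∈ C → c • a ∈ C)
    {y x : Fin n → ℝ} (hy : y ∈ intrinsicInterior ℝ C) (hx : x ∈ C)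
    {ε : ℝ} (hε : 0 < ε) : ε • y + x ∈ intrinsicInterior ℝ C := by
  rw [mem_relint_iff'] at hy ⊢
  obtain ⟨hyspan, δ, hδ, hy⟩ := hy
  have h0span : (0 : Fin n → ℝ) ∈ affineSpan ℝ C := subset_affineSpan ℝ C h0
  have hxspan : x ∈ affineSpan ℝ C := subset_affineSpan ℝ C hx
  constructor
  · have := AffineSubspace.smul_vsub_vadd_mem (affineSpan ℝ C) ε hyspan h0span hxspan
    simpa [vsub_eq_sub, vadd_eq_add, sub_zero] using this
  · refine ⟨ε * δ, mul_pos hε hδ, fun u hu hd => ?_⟩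
    set v : Fin n → ℝ := ε⁻¹ • (u - x) with hv
    have huv : ε • v + x = u := by
      rw [hv, smul_inv_smul₀ hε.ne', sub_add_cancel]
    have hvspan : v ∈ affineSpan ℝ C := by
      have := AffineSubspace.smul_vsub_vadd_mem (affineSpan ℝ C) ε⁻¹ hu hxspan h0span
      simpa [vsub_eq_sub, vadd_eq_add, add_zero, hv] using this
    have hdist : dist u (ε • y + x) = ε * dist v y := by
      rw [← huv, dist_eq_norm, dist_eq_norm]
      have he : ε • v + x - (ε • y + x) = ε • (v - y) := by
        rw [smul_sub]; abel
      rw [he, norm_smul, Real.norm_of_nonneg hε.le]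
    have : dist v y < δ := by
      rw [hdist] at hd
      exact (mul_lt_mul_iff_right₀ hε).1 hd
    have hvC : v ∈ C := hy v hvspan this
    rw [← huv]
    exact hadd _ _ (hsmul ε v hε.le hvC) hx


lemma isLat_sum' {n : ℕ} {ι : Type*} (s : Finset ι) (f : ι → Fin n → ℝ)
    (h : ∀ a ∈ s, isLat (f a)) : isLat (∑ a ∈ s, f a) := by
  classical
  induction s using Finset.induction_on with
  | empty => intro i; exact ⟨0, by simp⟩
  | @insert a s' hnotmem ih =>
    rw [Finset.sum_insert hnotmem]
    intro i
    obtain ⟨z1, hz1⟩ := h a (Finset.mem_insert_self a s') i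
    obtain ⟨z2, hz2⟩ := ih (fun b hb => h b (Finset.mem_insert_of_mem hb)) i
    exact ⟨z1 + z2, by push_cast [Pi.add_apply, hz1, hz2]; ring⟩

lemma isLat_lift' {m : ℕ} {v : Fin m → ℝ} (hv : isLat v) : isLat (lift v) := fun j => by
  refine Fin.lastCases ?_ (fun i => ?_) j
  · exact ⟨1, by simp [lift, Fin.snoc_last]⟩
  · obtain ⟨z, hz⟩ := hv i
    exact ⟨z, by simpa [lift, Fin.snoc_castSucc] using hz⟩

lemma isLat_nsmul' {n : ℕ} {x : Fin n → ℝ} (hx : isLat x) (k : ℕ) : isLat (k • x) := fun i => by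
  obtain ⟨z, hz⟩ := hx i
  exact ⟨k * z, by push_cast [Pi.smul_apply, hz]; ring⟩


lemma add_mem_cone' {m : ℕ} {P : Set (Fin m → ℝ)} (hconv : Convex ℝ P)
    {a b : Fin (m + 1) → ℝ} (ha : a ∈ coneOf P) (hb : b ∈ coneOf P) :
    a + b ∈ coneOf P := by
  obtain ⟨c1, p1, h1, hp1, rfl⟩ := ha
  obtain ⟨c2, p2, h2, hp2, rfl⟩ := hb
  have := sum_mem_cone' (ι := Fin 2) hconv (μ := ![c1, c2]) (v := ![p1, p2])
    (fun i => by fin_cases i <;> assumption) (fun i => by fin_cases i <;> assumption)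
  simpa [Fin.sum_univ_two] using this

lemma smul_mem_cone' {m : ℕ} {P : Set (Fin m → ℝ)} {c : ℝ} (hc : 0 ≤ c)
    {a : Fin (m + 1) → ℝ} (ha : a ∈ coneOf P) : c • a ∈ coneOf P := by
  obtain ⟨c', p', h', hp', rfl⟩ := ha
  exact ⟨c * c', p', mul_nonneg hc h', hp', smul_smul c c' (lift p')⟩

/-- for a lattice polytope of dimension `d`, `rdeg y ≤ d + 1`
for all `y ∈ M*(P)`. -/
theorem stmt5 {m d : ℕ} (P : Set (Fin m → ℝ)) (V : Set (Fin m → ℝ))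
    (hV : V.Finite) (hVlat : ∀ p ∈ V, isLat p) (hP : P = convexHull ℝ V)
    (hdim : Module.finrank ℝ (vectorSpan ℝ P) = d) :
    ∀ y ∈ Mstar P, ∃ z w, z ∈ Mstar P ∧ w ∈ Msemi P ∧ y = z + w ∧ deg z ≤ d + 1 := by
  intro y hy
  obtain ⟨hyint, hylat⟩ := hy
  by_cases hdeg : deg y ≤ d + 1
  · exact ⟨y, 0, ⟨hyint, hylat⟩, (Msemi P).zero_mem, (add_zero y).symm, hdeg⟩
  push_neg at hdeg
  have hconv : Convex ℝ P := hP ▸ convex_convexHull ℝ V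
  have hVP : V ⊆ P := hP ▸ subset_convexHull ℝ V
  obtain ⟨c, p, hc0, hpP, hyeq⟩ := intrinsicInterior_subset hyint
  have hcdeg : deg y = c := by
    rw [hyeq]; simp [deg, lift, Fin.snoc_last]
  have hc : 0 < c := by
    have h01 : (0 : ℝ) ≤ (d : ℝ) + 1 := by positivity
    rw [hcdeg] at hdeg; linarith
  have hpP' : p ∈ convexHull ℝ V := hP ▸ hpP
  obtain ⟨ι, hfin, v, a, hrange, hindep, hapos, hasum, hpsum⟩ :=
    eq_pos_convex_span_of_mem_convexHull hpP'
  letI := hfin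
  haveI : Nonempty ι := by
    rcases isEmpty_or_nonempty ι with h | h
    · exfalso; rw [Finset.univ_eq_empty, Finset.sum_empty] at hasum; norm_num at hasum
    · exact h
  have hviV : ∀ i, v i ∈ V := fun i => hrange (Set.mem_range_self i)
  have hviP : ∀ i, v i ∈ P := fun i => hVP (hviV i)
  have hcard : (Fintype.card ι : ℝ) ≤ (d : ℝ) + 1 := by
    have h1 := hindep.card_le_finrank_succ
    have h2 : Module.finrank ℝ (vectorSpan ℝ (Set.range v)) ≤ d := by
      rw [← hdim]
      exact Submodule.finrank_mono (vectorSpan_mono ℝ (Set.range_subset_iff.2 hviP))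
    have : Fintype.card ι ≤ d + 1 := le_trans h1 (by omega)
    exact_mod_cast this
  set μ : ι → ℝ := fun i => c * a i with hμdef
  have hμpos : ∀ i, 0 < μ i := fun i => mul_pos hc (hapos i)
  set k : ι → ℕ := fun i => ⌈μ i⌉₊ - 1 with hkdef
  have hkcast : ∀ i, (k i : ℝ) = (⌈μ i⌉₊ : ℝ) - 1 := fun i => by
    rw [hkdef]
    rw [Nat.cast_sub (Nat.one_le_ceil_iff.2 (hμpos i))]
    norm_num
  set μ' : ι → ℝ := fun i => μ i - k i with hμ'def
  have hμ'pos : ∀ i, 0 < μ' i := fun i => by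
    have h1 := Nat.ceil_lt_add_one (hμpos i).le
    have h2 := hkcast i
    simp only [hμ'def]; linarith
  have hμ'le : ∀ i, μ' i ≤ 1 := fun i => by
    have h1 := Nat.le_ceil (μ i)
    have h2 := hkcast i
    simp only [hμ'def]; linarith
  have hy2 : y = ∑ i, μ i • lift (v i) := by
    rw [hyeq, sum_smul_lift', smul_lift']
    have h1 : c • p = ∑ i, μ i • v i := by
      funext j
      rw [← hpsum]
      simp only [Pi.smul_apply, Finset.sum_apply, smul_eq_mul, Finset.mul_sum, hμdef, mul_assoc]
    have h2 : c = ∑ i, μ i := by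
      simp only [hμdef]; rw [← Finset.mul_sum, hasum, mul_one]
    rw [h1, h2]
  set w : Fin (m + 1) → ℝ := ∑ i, k i • lift (v i) with hwdef
  set z : Fin (m + 1) → ℝ := ∑ i, μ' i • lift (v i) with hzdef
  have hwM : w ∈ Msemi P := by
    rw [hwdef]
    have hgen : ∀ i : ι, lift (v i) ∈ Msemi P := fun i =>
      AddSubmonoid.subset_closure
        (show lift (v i) ∈ {y | ∃ p ∈ P, isLat p ∧ y = lift p} from
          ⟨v i, hviP i, hVlat _ (hviV i), rfl⟩)
    exact AddSubmonoid.sum_mem _ fun i _ => AddSubmonoid.nsmul_mem _ (hgen i) _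
  have hyzw : y = z + w := by
    rw [hy2, hzdef, hwdef, ← Finset.sum_add_distrib]
    refine Finset.sum_congr rfl fun i _ => ?_
    rw [← Nat.cast_smul_eq_nsmul ℝ (k i), ← add_smul]
    congr 1
    simp only [hμ'def]; ring
  have hdegz : deg z = ∑ i, μ' i := by
    rw [hzdef, sum_smul_lift']
    simp [deg, Fin.snoc_last]
  have hdegzle : deg z ≤ (d : ℝ) + 1 := by
    rw [hdegz]
    have h1 : (∑ i, μ' i) ≤ ∑ _i : ι, (1 : ℝ) :=
      Finset.sum_le_sum fun i _ => hμ'le i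
    rw [Finset.sum_const, Finset.card_univ, nsmul_eq_mul, mul_one] at h1
    linarith
  have hwlat : isLat w := by
    rw [hwdef]
    exact isLat_sum' _ _ fun i _ => isLat_nsmul' (isLat_lift' (hVlat _ (hviV i))) (k i)
  have hzlat : isLat z := by
    intro j
    obtain ⟨zy, hzy⟩ := hylat j
    obtain ⟨zw, hzw⟩ := hwlat j
    refine ⟨zy - zw, ?_⟩
    have hj : y j = z j + w j := by rw [hyzw]; rfl
    push_cast
    rw [← hzy, ← hzw] at *
    linarith
  set ε : ℝ := Finset.univ.inf' Finset.univ_nonempty (fun i => μ' i / μ i) with hεdef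
  have hεpos : 0 < ε := by
    rw [hεdef, Finset.lt_inf'_iff]
    exact fun i _ => div_pos (hμ'pos i) (hμpos i)
  have hεle : ∀ i, ε * μ i ≤ μ' i := fun i => by
    have h1 : ε ≤ μ' i / μ i := by
      rw [hεdef]; exact Finset.inf'_le _ (Finset.mem_univ i)
    exact (le_div_iff₀ (hμpos i)).1 h1
  set x : Fin (m + 1) → ℝ := ∑ i, (μ' i - ε * μ i) • lift (v i) with hxdef
  have hxC : x ∈ coneOf P := by
    rw [hxdef]
    exact sum_mem_cone' hconv (fun i => sub_nonneg.2 (hεle i)) hviP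
  have hz_eq : z = ε • y + x := by
    rw [hy2, hzdef, hxdef]
    funext j
    simp only [Pi.add_apply, Pi.smul_apply, Finset.sum_apply, smul_eq_mul, Finset.mul_sum]
    rw [← Finset.sum_add_distrib]
    refine Finset.sum_congr rfl fun i _ => ?_
    ring
  have h0C : (0 : Fin (m + 1) → ℝ) ∈ coneOf P :=
    ⟨0, v (Classical.arbitrary ι), le_refl 0, hviP _, (zero_smul ℝ _).symm⟩
  have hzint : z ∈ intrinsicInterior ℝ (coneOf P) := by
    rw [hz_eq]
    exact smul_add_mem_relint' h0C (fun a b ha hb => add_mem_cone' hconv ha hb)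
      (fun c a hc ha => smul_mem_cone' hc ha) hyint hxC hεpos
  exact ⟨z, w, ⟨hzint, hzlat⟩, hwM, hyzw, hdegzle⟩
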